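/- Let Ω ⊂ ℝⁿ be bounded, let m₁ and m₂ be finite Borel measures on cl(Ω), and let a, b : cl(Ω) → ℝⁿ be Borel measurable with ∫|a−b| dm₁ < ∞. Then d*((I,a)#m₁, (I,b)#m₂) ≤ ∫_{cl(Ω)} |a(x) − b(x)| dm₁(x) + ‖m₁ − m₂‖_{TV}, where ‖m₁ − m₂‖_{TV} = |m₁ − m₂|(cl(Ω)) is the total variation distance. -/

import Mathlib

open Set MeasureTheory Filter
open scoped RealInnerProductSpace ENNReal Topology

noncomputable section

namespace MFG

/-- Euclidean space `ℝⁿ`. -/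
abbrev Euc (n : ℕ) := EuclideanSpace ℝ (Fin n)

variable {n : ℕ}

/-- The pushforward `(I,α)#m` of a measure `m` under `x ↦ (x, α x)`. -/
def pushfwd (m : Measure (Euc n)) (α : Euc n → Euc n) : Measure (Euc n × Euc n) :=
  Measure.map (fun x => (x, α x)) m

/-- `Λ_q(μ) = (∫ |α|^q dμ(x,α))^{1/q}`. -/
def LambdaQ (q : ℝ) (μ : Measure (Euc n × Euc n)) : ℝ :=
  (∫ z, ‖z.2‖ ^ q ∂μ) ^ (1 / q)

/-- `Λ_∞(μ)`: the smallest `R ≥ 0` such that `μ` is supported in `{|α| ≤ R}`. -/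
def LambdaInf (μ : Measure (Euc n × Euc n)) : ℝ :=
  sInf {R : ℝ | 0 ≤ R ∧ μ {z : Euc n × Euc n | R < ‖z.2‖} = 0}

/-- `L^q(ρ)` norm of a vector field. -/
def LqNormV (q : ℝ) (ρ : Measure (Euc n)) (f : Euc n → Euc n) : ℝ :=
  (∫ x, ‖f x‖ ^ q ∂ρ) ^ (1 / q)

/-- `L^q(ρ)` norm of a scalar function. -/
def LqNormR (q : ℝ) (ρ : Measure (Euc n)) (f : Euc n → ℝ) : ℝ :=
  (∫ x, |f x| ^ q ∂ρ) ^ (1 / q)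

/-- The bounded-Lipschitz metric `d*` on measures on `cl(Ω) × ℝⁿ`. -/
def dstar (μ ν : Measure (Euc n × Euc n)) : ℝ :=
  sSup {r : ℝ | ∃ φ : Euc n × Euc n → ℝ, LipschitzWith 1 φ ∧ (∀ z, |φ z| ≤ 1) ∧
    r = (∫ z, φ z ∂μ) - ∫ z, φ z ∂ν}

/-- The bounded-Lipschitz metric `d*` on measures on `cl(Ω)`. -/
def dstarX (μ ν : Measure (Euc n)) : ℝ :=
  sSup {r : ℝ | ∃ φ : Euc n → ℝ, LipschitzWith 1 φ ∧ (∀ z, |φ z| ≤ 1) ∧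
    r = (∫ z, φ z ∂μ) - ∫ z, φ z ∂ν}

/-- The measure `f dx` on `Ω` with Lebesgue density `f`. -/
def densMeas (Ω : Set (Euc n)) (f : Euc n → ℝ) : Measure (Euc n) :=
  (volume.restrict Ω).withDensity fun x => ENNReal.ofReal (f x)

/-- `∂_t u`. -/
def pderivT (u : ℝ → Euc n → ℝ) (t : ℝ) (x : Euc n) : ℝ :=
  deriv (fun s => u s x) t

/-- `D_x u`, the spatial gradient. -/
def spaceGrad (u : ℝ → Euc n → ℝ) (t : ℝ) (x : Euc n) : Euc n :=
  gradient (u t) x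

/-- The Laplacian of a function on `ℝⁿ`. -/
def lapl (f : Euc n → ℝ) (x : Euc n) : ℝ :=
  ∑ i : Fin n, fderiv ℝ (fun y => fderiv ℝ f y (EuclideanSpace.single i 1)) x
    (EuclideanSpace.single i 1)

/-- The (spatial) divergence of a vector field on `ℝⁿ`. -/
def divg (F : Euc n → Euc n) (x : Euc n) : ℝ :=
  ∑ i : Fin n, fderiv ℝ (fun y => F y i) x (EuclideanSpace.single i 1)

/-- `u ∈ C^{1,2}(Q)`: continuous on `Q = [0,T] × cl(Ω)`, once differentiable in time,
twice in space. -/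
def C12 (T : ℝ) (Ω : Set (Euc n)) (u : ℝ → Euc n → ℝ) : Prop :=
  ContinuousOn (fun z : ℝ × Euc n => u z.1 z.2) (Icc 0 T ×ˢ closure Ω) ∧
  ∀ t ∈ Icc (0:ℝ) T, ∀ x ∈ closure Ω,
    DifferentiableAt ℝ (fun s => u s x) t ∧ ContDiffAt ℝ 2 (u t) x

/-- `sup_Q v`. -/
def supQ (T : ℝ) (Ω : Set (Euc n)) (v : ℝ → Euc n → ℝ) : ℝ :=
  sSup ((fun z : ℝ × Euc n => v z.1 z.2) '' (Icc 0 T ×ˢ closure Ω))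

/-- `sup_{cl Ω} v`. -/
def supX (Ω : Set (Euc n)) (v : Euc n → ℝ) : ℝ :=
  sSup (v '' closure Ω)

/-- `N` is the outward unit normal vector field on `∂Ω`. -/
def OutwardNormal (Ω : Set (Euc n)) (N : Euc n → Euc n) : Prop :=
  ∀ x ∈ frontier Ω, ‖N x‖ = 1 ∧
    ∀ᶠ s : ℝ in 𝓝[>] (0:ℝ), x + s • N x ∉ closure Ω ∧ x - s • N x ∈ Ω

/-- `Θ_θ(μ)`: pushforward of `μ` under `(x,α) ↦ (x, α/θ)`. -/
def Theta (θ : ℝ) (μ : Measure (Euc n × Euc n)) : Measure (Euc n × Euc n) :=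
  Measure.map (fun z : Euc n × Euc n => (z.1, θ⁻¹ • z.2)) μ

/-- `L^θ(t,x,α,μ) = θ L(t,x,α/θ,Θ_θ(μ))`. -/
def Ltheta (L : ℝ → Euc n → Euc n → Measure (Euc n × Euc n) → ℝ)
    (θ t : ℝ) (x a : Euc n) (μ : Measure (Euc n × Euc n)) : ℝ :=
  θ * L t x (θ⁻¹ • a) (Theta θ μ)

/-- `H^θ`, the Legendre transform of `L^θ` in the velocity variable. -/
def Htheta (L : ℝ → Euc n → Euc n → Measure (Euc n × Euc n) → ℝ)
    (θ t : ℝ) (x p : Euc n) (μ : Measure (Euc n × Euc n)) : ℝ :=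
  ⨆ a : Euc n, (⟪p, a⟫ - Ltheta L θ t x a μ)

/-- Sequential continuity on `[0,T] × cl(Ω) × ℝⁿ × 𝔐_{∞,R}(cl(Ω)×ℝⁿ)` (every `R`),
the measure argument carrying the metric `d*` (scalar-valued version). -/
def MContR (T : ℝ) (Ω : Set (Euc n))
    (F : ℝ → Euc n → Euc n → Measure (Euc n × Euc n) → ℝ) : Prop :=
  ∀ R > (0:ℝ), ∀ (tk : ℕ → ℝ) (xk pk : ℕ → Euc n)
    (μk : ℕ → Measure (Euc n × Euc n)) (t : ℝ) (x p : Euc n)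
    (μ : Measure (Euc n × Euc n)),
    (∀ k, tk k ∈ Icc 0 T) → t ∈ Icc 0 T →
    (∀ k, xk k ∈ closure Ω) → x ∈ closure Ω →
    (∀ k, μk k Set.univ ≤ 1 ∧ μk k {z : Euc n × Euc n | R < ‖z.2‖} = 0) →
    μ Set.univ ≤ 1 → μ {z : Euc n × Euc n | R < ‖z.2‖} = 0 →
    Tendsto tk atTop (𝓝 t) → Tendsto xk atTop (𝓝 x) → Tendsto pk atTop (𝓝 p) →
    Tendsto (fun k => dstar (μk k) μ) atTop (𝓝 0) →
    Tendsto (fun k => F (tk k) (xk k) (pk k) (μk k)) atTop (𝓝 (F t x p μ))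

/-- Sequential continuity (vector-valued version). -/
def MContV (T : ℝ) (Ω : Set (Euc n))
    (F : ℝ → Euc n → Euc n → Measure (Euc n × Euc n) → Euc n) : Prop :=
  ∀ R > (0:ℝ), ∀ (tk : ℕ → ℝ) (xk pk : ℕ → Euc n)
    (μk : ℕ → Measure (Euc n × Euc n)) (t : ℝ) (x p : Euc n)
    (μ : Measure (Euc n × Euc n)),
    (∀ k, tk k ∈ Icc 0 T) → t ∈ Icc 0 T →
    (∀ k, xk k ∈ closure Ω) → x ∈ closure Ω →
    (∀ k, μk k Set.univ ≤ 1 ∧ μk k {z : Euc n × Euc n | R < ‖z.2‖} = 0) →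
    μ Set.univ ≤ 1 → μ {z : Euc n × Euc n | R < ‖z.2‖} = 0 →
    Tendsto tk atTop (𝓝 t) → Tendsto xk atTop (𝓝 x) → Tendsto pk atTop (𝓝 p) →
    Tendsto (fun k => dstar (μk k) μ) atTop (𝓝 0) →
    Tendsto (fun k => F (tk k) (xk k) (pk k) (μk k)) atTop (𝓝 (F t x p μ))

end MFG

open MFG
private lemma phi_integrable {n : ℕ} {φ : Euc n × Euc n → ℝ}
    (hφ : LipschitzWith 1 φ) (hφb : ∀ z, |φ z| ≤ 1)
    {f : Euc n → Euc n} (hf : Measurable f) (μ : Measure (Euc n)) [IsFiniteMeasure μ] :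
    Integrable (fun x => φ (x, f x)) μ := by
  have hm : Measurable fun x => φ (x, f x) :=
    hφ.continuous.measurable.comp (measurable_id.prodMk hf)
  refine ⟨hm.aestronglyMeasurable, HasFiniteIntegral.of_bounded (C := 1) ?_⟩
  exact ae_of_all _ fun x => by simpa [Real.norm_eq_abs] using hφb (x, f x)

/-- `d*((I,a)#m₁, (I,b)#m₂) ≤ ∫|a−b| dm₁ + ‖m₁ − m₂‖_{TV}`. -/
theorem stmt_13
    {n : ℕ} (hn : 1 ≤ n)
    (Ω : Set (Euc n)) (hΩo : IsOpen Ω) (hΩb : Bornology.IsBounded Ω) (hΩne : Ω.Nonempty)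
    (m₁ m₂ : Measure (Euc n)) [IsFiniteMeasure m₁] [IsFiniteMeasure m₂]
    (hm₁s : m₁ ((closure Ω)ᶜ) = 0) (hm₂s : m₂ ((closure Ω)ᶜ) = 0)
    (a b : Euc n → Euc n) (ha : Measurable a) (hb : Measurable b)
    (hint : Integrable (fun x => ‖a x - b x‖) m₁) :
    dstar (pushfwd m₁ a) (pushfwd m₂ b) ≤
      (∫ x, ‖a x - b x‖ ∂m₁) +
        ((m₁.toSignedMeasure - m₂.toSignedMeasure).totalVariation (closure Ω)).toReal := by
  classical
  set K := closure Ω with hK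
  have hKm : MeasurableSet K := isClosed_closure.measurableSet
  set s := m₁.toSignedMeasure - m₂.toSignedMeasure with hs
  set p := s.toJordanDecomposition.posPart with hpdef
  set q := s.toJordanDecomposition.negPart with hqdef
  haveI : IsFiniteMeasure p := s.toJordanDecomposition.posPart_finite
  haveI : IsFiniteMeasure q := s.toJordanDecomposition.negPart_finite
  -- key algebraic identity
  have key : ∀ A : Set (Euc n), MeasurableSet A →
      (m₁ A).toReal + (q A).toReal = (m₂ A).toReal + (p A).toReal := by
    intro A hA
    have h := congrArg (fun t : SignedMeasure (Euc n) => t A)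
      s.toSignedMeasure_toJordanDecomposition
    simp only [JordanDecomposition.toSignedMeasure, hs, VectorMeasure.sub_apply,
      Measure.toSignedMeasure_apply_measurable hA, measureReal_def] at h
    linarith
  have hpq : m₁ + q = m₂ + p := by
    ext A hA
    rw [Measure.add_apply, Measure.add_apply]
    have h1 : m₁ A ≠ ∞ := measure_ne_top _ _
    have h2 : m₂ A ≠ ∞ := measure_ne_top _ _
    have h3 : p A ≠ ∞ := measure_ne_top _ _
    have h4 : q A ≠ ∞ := measure_ne_top _ _
    have ht : (m₁ A + q A).toReal = (m₂ A + p A).toReal := by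
      rw [ENNReal.toReal_add h1 h4, ENNReal.toReal_add h2 h3]
      exact key A hA
    exact (ENNReal.toReal_eq_toReal_iff' (ENNReal.add_ne_top.2 ⟨h1, h4⟩)
      (ENNReal.add_ne_top.2 ⟨h2, h3⟩)).mp ht
  -- p and q vanish on Kᶜ
  obtain ⟨u, hu, hpu, hqu⟩ := s.toJordanDecomposition.mutuallySingular
  have hq1 : q (Kᶜ ∩ u) = 0 := by
    have hA : MeasurableSet (Kᶜ ∩ u) := hKm.compl.inter hu
    have hm1 : m₁ (Kᶜ ∩ u) = 0 := measure_mono_null Set.inter_subset_left hm₁s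
    have hm2 : m₂ (Kᶜ ∩ u) = 0 := measure_mono_null Set.inter_subset_left hm₂s
    have hp0 : p (Kᶜ ∩ u) = 0 := measure_mono_null Set.inter_subset_right hpu
    have := key _ hA
    rw [hm1, hm2, hp0] at this
    simp only [ENNReal.toReal_zero, zero_add, add_zero] at this
    exact (ENNReal.toReal_eq_zero_iff _).mp this |>.resolve_right (measure_ne_top _ _)
  have hp1 : p (Kᶜ ∩ uᶜ) = 0 := by
    have hA : MeasurableSet (Kᶜ ∩ uᶜ) := hKm.compl.inter hu.compl
    have hm1 : m₁ (Kᶜ ∩ uᶜ) = 0 := measure_mono_null Set.inter_subset_left hm₁s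
    have hm2 : m₂ (Kᶜ ∩ uᶜ) = 0 := measure_mono_null Set.inter_subset_left hm₂s
    have hq0 : q (Kᶜ ∩ uᶜ) = 0 := measure_mono_null Set.inter_subset_right hqu
    have := key _ hA
    rw [hm1, hm2, hq0] at this
    simp only [ENNReal.toReal_zero, zero_add, add_zero] at this
    exact (ENNReal.toReal_eq_zero_iff _).mp this.symm |>.resolve_right (measure_ne_top _ _)
  have hcover : (Kᶜ : Set (Euc n)) ⊆ (Kᶜ ∩ u) ∪ (Kᶜ ∩ uᶜ) := by
    intro x hx; by_cases hxu : x ∈ u <;> simp [hx, hxu]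
  have hpc : p Kᶜ = 0 := measure_mono_null hcover
    (measure_union_null (measure_mono_null Set.inter_subset_right hpu) hp1)
  have hqc : q Kᶜ = 0 := measure_mono_null hcover
    (measure_union_null hq1 (measure_mono_null Set.inter_subset_right hqu))
  have hpK : p Set.univ = p K := by
    rw [← measure_add_measure_compl hKm, hpc, add_zero]
  have hqK : q Set.univ = q K := by
    rw [← measure_add_measure_compl hKm, hqc, add_zero]
  have hTV : (s.totalVariation K).toReal = (p Set.univ).toReal + (q Set.univ).toReal := by
    simp only [SignedMeasure.totalVariation, Measure.add_apply, ← hpdef, ← hqdef]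
    rw [ENNReal.toReal_add (measure_ne_top _ _) (measure_ne_top _ _), hpK, hqK]
  rw [dstar]
  apply Real.sSup_le
  · rintro r ⟨φ, hφ, hφb, rfl⟩
    have hIa := phi_integrable hφ hφb ha m₁
    have hIb1 := phi_integrable hφ hφb hb m₁
    have hIb2 := phi_integrable hφ hφb hb m₂
    have hIbp := phi_integrable hφ hφb hb p
    have hIbq := phi_integrable hφ hφb hb q
    have e1 : ∫ z, φ z ∂(pushfwd m₁ a) = ∫ x, φ (x, a x) ∂m₁ := by
      rw [pushfwd]
      exact integral_map (measurable_id.prodMk ha).aemeasurable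
        hφ.continuous.aestronglyMeasurable
    have e2 : ∫ z, φ z ∂(pushfwd m₂ b) = ∫ x, φ (x, b x) ∂m₂ := by
      rw [pushfwd]
      exact integral_map (measurable_id.prodMk hb).aemeasurable
        hφ.continuous.aestronglyMeasurable
    rw [e1, e2]
    have h1 : ∫ x, φ (x, a x) ∂m₁ - ∫ x, φ (x, b x) ∂m₁ ≤ ∫ x, ‖a x - b x‖ ∂m₁ := by
      rw [← integral_sub hIa hIb1]
      refine integral_mono (hIa.sub hIb1) hint fun x => ?_
      have hd := hφ.dist_le_mul (x, a x) (x, b x)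
      rw [Prod.dist_eq] at hd
      simp only [dist_self, NNReal.coe_one, one_mul] at hd
      have hd' : dist (φ (x, a x)) (φ (x, b x)) ≤ ‖a x - b x‖ := by
        calc dist (φ (x, a x)) (φ (x, b x)) ≤ max 0 (dist (a x) (b x)) := hd
          _ = dist (a x) (b x) := max_eq_right dist_nonneg
          _ = ‖a x - b x‖ := dist_eq_norm _ _
      calc φ (x, a x) - φ (x, b x) ≤ |φ (x, a x) - φ (x, b x)| := le_abs_self _
        _ = dist (φ (x, a x)) (φ (x, b x)) := (Real.dist_eq _ _).symm
        _ ≤ ‖a x - b x‖ := hd'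
    have hsum : ∫ x, φ (x, b x) ∂m₁ + ∫ x, φ (x, b x) ∂q
        = ∫ x, φ (x, b x) ∂m₂ + ∫ x, φ (x, b x) ∂p := by
      rw [← integral_add_measure hIb1 hIbq, ← integral_add_measure hIb2 hIbp, hpq]
    have hup : ∫ x, φ (x, b x) ∂p ≤ (p Set.univ).toReal := by
      calc ∫ x, φ (x, b x) ∂p ≤ ∫ _x, (1:ℝ) ∂p :=
            integral_mono hIbp (integrable_const 1) fun x => (abs_le.1 (hφb _)).2
        _ = (p Set.univ).toReal := by simp [measureReal_def]
    have huq : -∫ x, φ (x, b x) ∂q ≤ (q Set.univ).toReal := by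
      rw [← integral_neg]
      calc ∫ x, -φ (x, b x) ∂q ≤ ∫ _x, (1:ℝ) ∂q :=
            integral_mono hIbq.neg (integrable_const 1)
              fun x => by have := (abs_le.1 (hφb (x, b x))).1; dsimp only; linarith
        _ = (q Set.univ).toReal := by simp [measureReal_def]
    rw [hTV]
    linarith
  · exact add_nonneg (integral_nonneg fun x => norm_nonneg _) ENNReal.toReal_nonneg
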